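/- Let M be a real symmetric N×N matrix such that M_{ij} < 0 for all i ≠ j. Then there exists an eigenvector v of M associated to the least eigenvalue μ(M) of M (i.e. v ≠ 0 and M v = μ(M) v, where μ(M) ≤ λ for every eigenvalue λ of M) such that v_i ≥ 0 for every i. -/

import Mathlib

open Matrix in

/-- Let `M` be a real symmetric `N×N` matrix with `M i j < 0` for all
`i ≠ j`. If `μ` is the least eigenvalue of `M` (i.e. `μ` is an eigenvalue and every
eigenvalue `l` of `M` satisfies `μ ≤ l`), then there is an eigenvector `v` of `M` for `μ`
all of whose components are nonnegative. -/
theorem least_eigenvalue_has_nonneg_eigenvector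
    (N : ℕ) (hN : 0 < N) (M : Matrix (Fin N) (Fin N) ℝ)
    (hsym : M.IsSymm)
    (hoff : ∀ i j : Fin N, i ≠ j → M i j < 0)
    (μ : ℝ)
    (hμ_eig : ∃ w : Fin N → ℝ, w ≠ 0 ∧ M.mulVec w = μ • w)
    (hμ_least : ∀ (l : ℝ) (w : Fin N → ℝ), w ≠ 0 → M.mulVec w = l • w → μ ≤ l) :
    ∃ v : Fin N → ℝ, v ≠ 0 ∧ M.mulVec v = μ • v ∧ ∀ i, 0 ≤ v i := by
  obtain ⟨w, hw0, hw⟩ := hμ_eig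
  set A : Matrix (Fin N) (Fin N) ℝ := M - μ • 1 with hA_def
  have hmulA : ∀ x : Fin N → ℝ, A.mulVec x = M.mulVec x - μ • x := by
    intro x
    simp [hA_def, Matrix.sub_mulVec, Matrix.smul_mulVec, Matrix.one_mulVec]
  have hA_herm : A.IsHermitian := by
    have hM : M.IsHermitian := by
      rw [Matrix.IsHermitian, Matrix.conjTranspose_eq_transpose_of_trivial]
      exact hsym
    have h1 : (μ • (1 : Matrix (Fin N) (Fin N) ℝ)).IsHermitian := by
      rw [Matrix.IsHermitian, Matrix.conjTranspose_smul]
      simp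
    exact hM.sub h1
  have hA_psd : A.PosSemidef := by
    apply hA_herm.posSemidef_iff_eigenvalues_nonneg.mpr
    intro i
    have hb := hA_herm.mulVec_eigenvectorBasis i
    set b : Fin N → ℝ := ⇑(hA_herm.eigenvectorBasis i) with hb_def
    have hbne : b ≠ 0 := by
      have := hA_herm.eigenvectorBasis.orthonormal.ne_zero i
      simpa [hb_def] using fun h => this (by ext j; exact congrFun (congrArg WithLp.ofLp h) j)
    have hMb : M.mulVec b = (hA_herm.eigenvalues i + μ) • b := by
      have := hmulA b
      rw [hb] at this
      linear_combination (norm := module) -this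
    have := hμ_least (hA_herm.eigenvalues i + μ) b hbne hMb
    show (0 : ℝ) ≤ _
    linarith
  -- the candidate vector
  set v : Fin N → ℝ := fun i => |w i| with hv_def
  have hv_nonneg : ∀ i, 0 ≤ v i := fun i => abs_nonneg _
  have hv0 : v ≠ 0 := by
    intro h
    apply hw0
    ext i
    have := congrFun h i
    simpa [hv_def, abs_eq_zero] using this
  -- quadratic forms
  have hvv : v ⬝ᵥ v = w ⬝ᵥ w := by
    simp only [dotProduct, hv_def, abs_mul_abs_self]
  have hq : v ⬝ᵥ M.mulVec v ≤ w ⬝ᵥ M.mulVec w := by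
    simp only [dotProduct, Matrix.mulVec, Finset.mul_sum]
    apply Finset.sum_le_sum
    intro i _
    apply Finset.sum_le_sum
    intro j _
    rcases eq_or_ne i j with rfl | hij
    · simp [hv_def, abs_mul_abs_self, mul_comm, mul_left_comm]
    · have hMij := hoff i j hij
      have h1 : w i * w j ≤ |w i| * |w j| := by
        rw [← abs_mul]; exact le_abs_self _
      simp only [hv_def]
      nlinarith
  have hwq : w ⬝ᵥ A.mulVec w = 0 := by
    rw [hmulA, hw]
    simp [dotProduct_sub]
  have hvq_le : v ⬝ᵥ A.mulVec v ≤ 0 := by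
    rw [hmulA v]
    have : v ⬝ᵥ (M.mulVec v - μ • v) = v ⬝ᵥ M.mulVec v - μ * (v ⬝ᵥ v) := by
      rw [dotProduct_sub, dotProduct_smul, smul_eq_mul]
    rw [this, hvv]
    have hwq' : w ⬝ᵥ M.mulVec w = μ * (w ⬝ᵥ w) := by
      rw [hw, dotProduct_smul, smul_eq_mul]
    linarith
  have hvq_ge : 0 ≤ v ⬝ᵥ A.mulVec v := by
    have := hA_psd.dotProduct_mulVec_nonneg v
    simpa using this
  have hvq : star v ⬝ᵥ A.mulVec v = 0 := by
    simp only [star_trivial]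
    linarith
  have hAv : A.mulVec v = 0 := (hA_psd.dotProduct_mulVec_zero_iff v).mp hvq
  refine ⟨v, hv0, ?_, hv_nonneg⟩
  have := hmulA v
  rw [hAv] at this
  linear_combination (norm := module) -this
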